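/- Let p be a prime not dividing a squarefree integer d < 0, and let 𝒪 be the ring of integers of ℚ(√d), assumed to have (p) inert. Let R = 𝒪/(pⁿ) with conjugation σ. Then the set of σ-fixed points of ℙ¹(R) (under σ(x:y) = (σx : σy)) is in bijection with ℙ¹(ℤ/pⁿℤ), and hence has cardinality pⁿ + pⁿ⁻¹. -/

import Mathlib

set_option synthInstance.maxHeartbeats 1000000
set_option maxHeartbeats 1000000

open NumberField

/-- A pair `(x, y) ∈ R²` is unimodular if it generates `R` as an `R`-module. -/
def IsUnimodularPair {R : Type*} [CommRing R] (v : R × R) : Prop :=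
  ∃ a b : R, a * v.1 + b * v.2 = 1

/-- The equivalence relation `(x, y) ~ (u·x, u·y)` for a unit `u` on unimodular pairs. -/
def unimodSetoid (R : Type*) [CommRing R] : Setoid {v : R × R // IsUnimodularPair v} where
  r v w := ∃ u : Rˣ, (u : R) * v.1.1 = w.1.1 ∧ (u : R) * v.1.2 = w.1.2
  iseqv := by
    constructor
    · exact fun v => ⟨1, by simp, by simp⟩
    · rintro v w ⟨u, h1, h2⟩
      exact ⟨u⁻¹, by rw [← h1, ← mul_assoc, Units.inv_mul, one_mul],
        by rw [← h2, ← mul_assoc, Units.inv_mul, one_mul]⟩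
    · rintro v w x ⟨u, h1, h2⟩ ⟨u', h1', h2'⟩
      exact ⟨u' * u, by rw [Units.val_mul, mul_assoc, h1, h1'],
        by rw [Units.val_mul, mul_assoc, h2, h2']⟩

/-- The projective line `ℙ¹(R)` over a commutative ring `R`. -/
def ProjLine (R : Type*) [CommRing R] := Quotient (unimodSetoid R)

/-- The action of a ring automorphism `f` of `R` on `ℙ¹(R)`, `(x : y) ↦ (f x : f y)`. -/
def ProjLine.map {R : Type*} [CommRing R] (f : R ≃+* R) : ProjLine R → ProjLine R :=
  Quotient.map
    (fun v => ⟨(f v.1.1, f v.1.2), by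
      obtain ⟨a, b, h⟩ := v.2
      exact ⟨f a, f b, by
        simp only [IsUnimodularPair, ← map_mul, ← map_add]
        rw [h, map_one]⟩⟩)
    (by
      rintro v w ⟨u, h1, h2⟩
      refine ⟨Units.map ((f : R →+* R) : R →* R) u, ?_, ?_⟩ <;>
        simp only [Units.coe_map, MonoidHom.coe_coe, RingHom.coe_coe, ← map_mul] <;>
        [rw [h1]; rw [h2]])


section General
variable {S : Type*} [CommRing S] (π : S) (f : S ≃+* S)

/-- mk of a pair -/
abbrev plmk (v : {v : S × S // IsUnimodularPair v}) : ProjLine S :=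
  Quotient.mk (unimodSetoid S) v

lemma plmk_map (v) : ProjLine.map f (plmk v) = plmk ⟨(f v.1.1, f v.1.2), by
    obtain ⟨a, b, h⟩ := v.2
    exact ⟨f a, f b, by
      simp only [IsUnimodularPair, ← map_mul, ← map_add]
      rw [h, map_one]⟩⟩ := rfl

lemma plmk_eq_iff (v w) : plmk (S := S) v = plmk w ↔
    ∃ u : Sˣ, (u : S) * v.1.1 = w.1.1 ∧ (u : S) * v.1.2 = w.1.2 := by
  constructor
  · exact fun h => Quotient.exact h
  · exact fun h => Quotient.sound h

noncomputable def projFixedEquiv (hu : ∀ x : S, IsUnit x ∨ π ∣ x) (hπ : ¬ IsUnit π) :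
    ({x : S // f x = x} ⊕ {z : S // π ∣ z ∧ f z = z}) ≃
      {q : ProjLine S // ProjLine.map f q = q} := by
  refine Equiv.ofBijective (fun a => match a with
    | Sum.inl ⟨x, hx⟩ => ⟨plmk ⟨(x, 1), ⟨0, 1, by ring⟩⟩, by
        rw [plmk_map, plmk_eq_iff]
        exact ⟨1, by simpa using hx, by simp⟩⟩
    | Sum.inr ⟨z, hz⟩ => ⟨plmk ⟨(1, z), ⟨1, 0, by ring⟩⟩, by
        rw [plmk_map, plmk_eq_iff]
        exact ⟨1, by simp, by simpa using hz.2⟩⟩) ⟨?_, ?_⟩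
  · rintro (⟨x₁, hx₁⟩ | ⟨z₁, hz₁⟩) (⟨x₂, hx₂⟩ | ⟨z₂, hz₂⟩) h <;>
      simp only [Subtype.mk.injEq] at h <;> rw [plmk_eq_iff] at h <;>
      obtain ⟨u, h1, h2⟩ := h
    · simp only [mul_one] at h2
      rw [h2, one_mul] at h1
      exact congrArg Sum.inl (Subtype.ext h1)
    · exfalso
      simp only [mul_one] at h2
      exact hπ (isUnit_of_dvd_unit (h2 ▸ hz₂.1) u.isUnit)
    · exfalso
      simp only at h2
      exact hπ (isUnit_of_dvd_unit hz₁.1 (IsUnit.of_mul_eq_one (a := z₁) u (by rw [mul_comm]; exact h2)))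
    · simp only [mul_one] at h1
      rw [h1, one_mul] at h2
      exact congrArg Sum.inr (Subtype.ext h2)
  · rintro ⟨q, hq⟩
    obtain ⟨v, rfl⟩ := Quotient.exists_rep q
    by_cases hy : IsUnit v.1.2
    · have hv : plmk v = plmk ⟨(v.1.1 * ↑hy.unit⁻¹, 1), ⟨0, 1, by ring⟩⟩ := by
        rw [plmk_eq_iff]
        refine ⟨hy.unit⁻¹, by rw [mul_comm], ?_⟩
        nth_rewrite 2 [← hy.unit_spec]
        exact Units.inv_mul _
      have hfix : f (v.1.1 * ↑hy.unit⁻¹) = v.1.1 * ↑hy.unit⁻¹ := by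
        have h := hq
        rw [show (⟦v⟧ : ProjLine S) = plmk v from rfl, hv, plmk_map, plmk_eq_iff] at h
        obtain ⟨u, h1, h2⟩ := h
        simp only [map_one, mul_one] at h2
        rwa [h2, one_mul] at h1
      exact ⟨Sum.inl ⟨v.1.1 * ↑hy.unit⁻¹, hfix⟩, Subtype.ext hv.symm⟩
    · have hπy : π ∣ v.1.2 := (hu v.1.2).resolve_left hy
      have hx : IsUnit v.1.1 := by
        rcases hu v.1.1 with h | h
        · exact h
        · exfalso
          obtain ⟨a, b, hab⟩ := v.2
          obtain ⟨c, hc⟩ := h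
          obtain ⟨d, hd⟩ := hπy
          exact hπ (isUnit_of_dvd_one ⟨a * c + b * d, by rw [← hab, hc, hd]; ring⟩)
      have hv : plmk v = plmk ⟨(1, ↑hx.unit⁻¹ * v.1.2), ⟨1, 0, by ring⟩⟩ := by
        rw [plmk_eq_iff]
        refine ⟨hx.unit⁻¹, ?_, rfl⟩
        nth_rewrite 2 [← hx.unit_spec]
        exact Units.inv_mul _
      have hfix : f (↑hx.unit⁻¹ * v.1.2) = ↑hx.unit⁻¹ * v.1.2 := by
        have h := hq
        rw [show (⟦v⟧ : ProjLine S) = plmk v from rfl, hv, plmk_map, plmk_eq_iff] at h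
        obtain ⟨u, h1, h2⟩ := h
        simp only [map_one, mul_one] at h1
        rwa [h1, one_mul] at h2
      exact ⟨Sum.inr ⟨↑hx.unit⁻¹ * v.1.2, Dvd.dvd.mul_left hπy _, hfix⟩, Subtype.ext hv.symm⟩
end General


section NT
open Polynomial
/-- An integer divisible by `k` inside `𝓞 K` is divisible in `ℤ`. -/
lemma int_dvd_of_dvd_in_ring {K : Type*} [Field K] [NumberField K]
    (k m : ℤ) (hk : k ≠ 0) (h : (k : 𝓞 K) ∣ (m : 𝓞 K)) : k ∣ m := by
  obtain ⟨w, hw⟩ := h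
  have hwK : (algebraMap (𝓞 K) K) w = algebraMap ℚ K ((m : ℚ) / (k : ℚ)) := by
    have h0 : (k : K) ≠ 0 := by exact_mod_cast (Int.cast_ne_zero (α := K)).mpr hk
    have := congrArg (algebraMap (𝓞 K) K) hw
    rw [map_mul, map_intCast, map_intCast] at this
    rw [map_div₀, map_intCast, map_intCast, eq_div_iff h0, mul_comm]
    exact this.symm
  have hint : IsIntegral ℤ ((m : ℚ) / (k : ℚ)) := by
    rw [← isIntegral_algebraMap_iff (algebraMap ℚ K).injective, ← hwK]
    exact (IsIntegral.of_finite ℤ w).map (IsScalarTower.toAlgHom ℤ (𝓞 K) K)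
  obtain ⟨y, hy⟩ := IsIntegrallyClosed.isIntegral_iff.mp hint
  refine ⟨y, ?_⟩
  have h0 : (k : ℚ) ≠ 0 := by exact_mod_cast (Int.cast_ne_zero (α := ℚ)).mpr hk
  have : (m : ℚ) = (k : ℚ) * (y : ℚ) := by
    rw [show ((y:ℤ):ℚ) = algebraMap ℤ ℚ y from rfl, hy, mul_div_cancel₀ _ h0]
  exact_mod_cast this

/-- Every element of `𝓞 K` for quadratic `K` has integer trace w.r.t. `σ`, and `σ` is an
involution. -/
lemma sigma_invol_trace {K : Type*} [Field K] [NumberField K]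
    (hdeg : Module.finrank ℚ K = 2) (σ : 𝓞 K ≃+* 𝓞 K)
    (hσ : ∀ x : 𝓞 K, σ x = x ↔ ∃ m : ℤ, x = (m : 𝓞 K)) (a : 𝓞 K) :
    σ (σ a) = a ∧ ∃ b : ℤ, a + σ a = (b : 𝓞 K) := by
  by_cases hfix : σ a = a
  · obtain ⟨m, rfl⟩ := (hσ a).mp hfix
    exact ⟨by rw [hfix, hfix], ⟨2 * m, by rw [hfix]; push_cast; ring⟩⟩
  · -- minpoly has degree 2
    have hint : IsIntegral ℤ a := IsIntegral.of_finite ℤ a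
    have hmono : (minpoly ℤ a).Monic := minpoly.monic hint
    have hdle : (minpoly ℤ a).natDegree ≤ 2 := by
      have h1 : minpoly ℚ ((algebraMap (𝓞 K) K) a) = (minpoly ℤ a).map (algebraMap ℤ ℚ) :=
        minpoly.isIntegrallyClosed_eq_field_fractions ℚ K hint
      have h2 : (minpoly ℚ ((algebraMap (𝓞 K) K) a)).natDegree ≤ Module.finrank ℚ K :=
        minpoly.natDegree_le _
      rw [h1, Polynomial.natDegree_map_eq_of_injective (algebraMap ℤ ℚ).injective_int, hdeg] at h2
      exact h2
    have hdpos : 0 < (minpoly ℤ a).natDegree := minpoly.natDegree_pos hint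
    have hdeg2 : (minpoly ℤ a).natDegree = 2 := by
      rcases Nat.lt_or_ge (minpoly ℤ a).natDegree 2 with h | h
      · exfalso
        have h1 : (minpoly ℤ a).natDegree = 1 := by omega
        have := hmono.eq_X_add_C h1
        have ha : a = ((- (minpoly ℤ a).coeff 0 : ℤ) : 𝓞 K) := by
          have h0 := minpoly.aeval ℤ a
          rw [this] at h0
          simp only [map_add, aeval_X, aeval_C] at h0
          push_cast
          rw [eq_neg_iff_add_eq_zero]
          simpa [eq_intCast] using h0
        exact hfix ((hσ a).mpr ⟨_, ha⟩)
      · omega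
    -- a² = b·a + c with integer b, c
    obtain ⟨b, c, hbc⟩ : ∃ b c : ℤ, a ^ 2 = (b : 𝓞 K) * a + (c : 𝓞 K) := by
      refine ⟨-(minpoly ℤ a).coeff 1, -(minpoly ℤ a).coeff 0, ?_⟩
      have h0 := minpoly.aeval ℤ a
      rw [Polynomial.aeval_eq_sum_range, hdeg2] at h0
      rw [Finset.sum_range_succ, Finset.sum_range_succ, Finset.sum_range_one] at h0
      have hc2 : (minpoly ℤ a).coeff 2 = 1 := by
        have := hmono.coeff_natDegree
        rwa [hdeg2] at this
      rw [hc2] at h0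
      simp only [zsmul_eq_mul, pow_zero, pow_one, one_smul, mul_one] at h0
      push_cast
      linear_combination h0
    have hbc' : (σ a) ^ 2 = (b : 𝓞 K) * σ a + (c : 𝓞 K) := by
      have := congrArg σ hbc
      simpa only [map_pow, map_mul, map_add, map_intCast] using this
    have hkey : a + σ a = (b : 𝓞 K) := by
      have hz : (a - σ a) * (a + σ a - (b : 𝓞 K)) = 0 := by linear_combination hbc - hbc'
      rcases mul_eq_zero.mp hz with h | h
      · exact absurd (sub_eq_zero.mp h).symm hfix
      · linear_combination h
    refine ⟨?_, ⟨b, hkey⟩⟩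
    have := congrArg σ hkey
    rw [map_add, map_intCast, ← hkey] at this
    linear_combination this

lemma fixed_mod_int {K : Type*} [Field K] [NumberField K]
    (hdeg : Module.finrank ℚ K = 2) (σ : 𝓞 K ≃+* 𝓞 K)
    (hσ : ∀ x : 𝓞 K, σ x = x ↔ ∃ m : ℤ, x = (m : 𝓞 K))
    (p n : ℕ) (hp : p.Prime) (hn : 1 ≤ n)
    (hinert : (Ideal.span {(p : 𝓞 K)}).IsPrime)
    (a : 𝓞 K) (h : σ a - a ∈ Ideal.span {(p : 𝓞 K) ^ n}) :
    ∃ m : ℤ, a - (m : 𝓞 K) ∈ Ideal.span {(p : 𝓞 K) ^ n} := by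
  obtain ⟨hσ2, b, hb⟩ := sigma_invol_trace hdeg σ hσ a
  rw [Ideal.mem_span_singleton] at h
  obtain ⟨w, hw⟩ := h
  have hpn0 : ((p : 𝓞 K)) ^ n ≠ 0 := pow_ne_zero n (Nat.cast_ne_zero.mpr hp.ne_zero)
  have hσw : σ w = -w := by
    have h1 := congrArg σ hw
    rw [map_sub, hσ2, map_mul, map_pow, map_natCast] at h1
    have h2 : (p : 𝓞 K) ^ n * σ w = (p : 𝓞 K) ^ n * (-w) := by linear_combination -h1 - hw
    exact mul_left_cancel₀ hpn0 h2
  have h2a : 2 * a = (b : 𝓞 K) - (p : 𝓞 K) ^ n * w := by linear_combination hb - hw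
  by_cases hp2 : p = 2
  · subst hp2
    have hnn : n - 1 + 1 = n := by omega
    have hpow : ((2:ℕ) : 𝓞 K) ^ n = 2 * ((2:ℕ) : 𝓞 K) ^ (n - 1) := by
      conv_lhs => rw [← hnn]
      rw [pow_succ']
      norm_num
    rw [hpow] at h2a
    have h2ne : ((2:ℤ) : 𝓞 K) ≠ 0 := Int.cast_ne_zero.mpr (by norm_num)
    have hbeven : (2 : ℤ) ∣ b := by
      refine int_dvd_of_dvd_in_ring 2 b (by norm_num) ⟨a + ((2:ℕ) : 𝓞 K) ^ (n-1) * w, ?_⟩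
      push_cast
      push_cast at h2a
      linear_combination -h2a
    obtain ⟨s, hs⟩ := hbeven
    have ha : a = (s : 𝓞 K) - ((2:ℕ) : 𝓞 K) ^ (n-1) * w := by
      refine mul_left_cancel₀ h2ne ?_
      rw [hs] at h2a
      push_cast
      push_cast at h2a
      linear_combination h2a
    have hsq : ∃ e : ℤ, w * w = (e : 𝓞 K) := by
      refine (hσ (w * w)).mp ?_
      rw [map_mul, hσw]
      ring
    obtain ⟨e, he⟩ := hsq
    rcases Int.even_or_odd e with ⟨f, ef⟩ | ⟨f, ef⟩
    · have hm : w * w ∈ Ideal.span {((2:ℕ) : 𝓞 K)} := by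
        refine Ideal.mem_span_singleton.mpr ⟨(f : 𝓞 K), ?_⟩
        rw [he, ef]; push_cast; ring
      have hw2 : ((2:ℕ) : 𝓞 K) ∣ w := by
        rcases hinert.mem_or_mem hm with h' | h' <;> exact Ideal.mem_span_singleton.mp h'
      obtain ⟨w', hw'⟩ := hw2
      refine ⟨s, Ideal.mem_span_singleton.mpr ⟨-w', ?_⟩⟩
      rw [ha, hw', hpow]; ring
    · have efO : (e : 𝓞 K) = 2 * (f : 𝓞 K) + 1 := by
        rw [ef]; push_cast; ring
      have hm : (w - 1) * (w + 1) ∈ Ideal.span {((2:ℕ) : 𝓞 K)} := by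
        refine Ideal.mem_span_singleton.mpr ⟨(f : 𝓞 K), ?_⟩
        push_cast
        linear_combination he + efO
      rcases hinert.mem_or_mem hm with h' | h'
      · obtain ⟨v, hv⟩ := Ideal.mem_span_singleton.mp h'
        refine ⟨s - 2 ^ (n-1), Ideal.mem_span_singleton.mpr ⟨-v, ?_⟩⟩
        rw [hpow, ha]
        push_cast
        push_cast at hv
        linear_combination -((2:𝓞 K) ^ (n-1)) * hv
      · obtain ⟨v, hv⟩ := Ideal.mem_span_singleton.mp h'
        refine ⟨s + 2 ^ (n-1), Ideal.mem_span_singleton.mpr ⟨-v, ?_⟩⟩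
        rw [hpow, ha]
        push_cast
        push_cast at hv
        linear_combination -((2:𝓞 K) ^ (n-1)) * hv
  · -- p odd
    have h1 : Nat.Coprime 2 (p ^ n) :=
      ((Nat.coprime_primes Nat.prime_two hp).mpr (Ne.symm hp2)).pow_right n
    have hcop : IsCoprime ((2:ℕ) : ℤ) ((p ^ n : ℕ) : ℤ) := Nat.isCoprime_iff_coprime.mpr h1
    obtain ⟨u, v, huv⟩ := hcop
    have huvO : (u : 𝓞 K) * 2 + (v : 𝓞 K) * (p : 𝓞 K) ^ n = 1 := by
      have h2 := congrArg (fun z : ℤ => (z : 𝓞 K)) huv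
      push_cast at h2
      linear_combination h2
    refine ⟨u * b, Ideal.mem_span_singleton.mpr ⟨v * a - u * w, ?_⟩⟩
    push_cast
    linear_combination (u : 𝓞 K) * h2a - a * huvO

end NT

section ZModSide
variable (p n : ℕ)

lemma zmod_unit_or_dvd (hp : p.Prime) (hn : 1 ≤ n) :
    ∀ x : ZMod (p^n), IsUnit x ∨ (p : ZMod (p^n)) ∣ x := by
  haveI : NeZero (p^n) := ⟨pow_ne_zero n hp.ne_zero⟩
  intro x
  by_cases h : p ∣ x.val
  · right
    obtain ⟨c, hc⟩ := h
    refine ⟨(c : ZMod (p^n)), ?_⟩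
    rw [← ZMod.natCast_rightInverse (n := p^n) x, hc]
    push_cast
    ring
  · left
    have hco : Nat.Coprime x.val (p^n) :=
      (((Nat.Prime.coprime_iff_not_dvd hp).mpr h).symm).pow_right n
    have := (ZMod.isUnit_iff_coprime x.val (p^n)).mpr hco
    rwa [ZMod.natCast_rightInverse (n := p^n) x] at this

lemma zmod_p_not_unit (hp : p.Prime) (hn : 1 ≤ n) : ¬ IsUnit (p : ZMod (p^n)) := by
  intro h
  have hco := (ZMod.isUnit_iff_coprime p (p^n)).mp h
  have h1 : p ∣ Nat.gcd p (p^n) := Nat.dvd_gcd dvd_rfl (dvd_pow_self p (by omega))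
  rw [hco] at h1
  have := Nat.dvd_one.mp h1
  have := hp.two_le
  omega

def dvdMap : ZMod (p^(n-1)) → {z : ZMod (p^n) // (p : ZMod (p^n)) ∣ z} := fun y =>
  ⟨((p * y.val : ℕ) : ZMod (p^n)), ⟨(y.val : ZMod (p^n)), by push_cast; ring⟩⟩

lemma card_dvd_zmod (hp : p.Prime) (hn : 1 ≤ n) :
    Nat.card {z : ZMod (p^n) // (p : ZMod (p^n)) ∣ z} = p^(n-1) := by
  haveI : NeZero (p^n) := ⟨pow_ne_zero n hp.ne_zero⟩
  haveI : NeZero (p^(n-1)) := ⟨pow_ne_zero _ hp.ne_zero⟩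
  have hnn : n - 1 + 1 = n := by omega
  have hpp : p * p^(n-1) = p^n := by rw [← pow_succ', hnn]
  have hbij : Function.Bijective (dvdMap p n) := by
    constructor
    · intro y₁ y₂ h
      have h1 : (((p * y₁.val : ℕ)) : ZMod (p^n)) = ((p * y₂.val : ℕ) : ZMod (p^n)) := by
        have := congrArg Subtype.val h
        simpa [dvdMap] using this
      rw [ZMod.natCast_eq_natCast_iff] at h1
      have h2 : (p:ℤ) * (p:ℤ)^(n-1) ∣ (p:ℤ) * (y₂.val:ℤ) - (p:ℤ) * (y₁.val:ℤ) := by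
        have h2' := Nat.modEq_iff_dvd.mp h1
        rw [← hpp] at h2'
        push_cast at h2'
        exact h2'
      have h2'' : (p:ℤ) * (p:ℤ)^(n-1) ∣ (p:ℤ) * ((y₂.val:ℤ) - (y₁.val:ℤ)) := by
        convert h2 using 1
        ring
      have hp0 : (p : ℤ) ≠ 0 := by exact_mod_cast hp.ne_zero
      have h3' := (mul_dvd_mul_iff_left hp0).mp h2''
      have h3 : ((p^(n-1):ℕ):ℤ) ∣ ((y₂.val : ℤ) - (y₁.val : ℤ)) := by push_cast; exact h3'
      have h4 : y₁.val ≡ y₂.val [MOD p^(n-1)] := Nat.modEq_iff_dvd.mpr h3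
      exact ZMod.val_injective _ (Nat.ModEq.eq_of_lt_of_lt h4 (ZMod.val_lt y₁) (ZMod.val_lt y₂))
    · rintro ⟨z, c, hc⟩
      refine ⟨(c.val : ZMod (p^(n-1))), Subtype.ext ?_⟩
      show ((p * (ZMod.val ((c.val : ℕ) : ZMod (p^(n-1)))) : ℕ) : ZMod (p^n)) = z
      rw [ZMod.val_natCast]
      have hmeq : p * (c.val % p^(n-1)) ≡ p * c.val [MOD p * p^(n-1)] :=
        Nat.ModEq.mul_left' p (Nat.mod_modEq _ _)
      rw [hpp] at hmeq
      rw [(ZMod.natCast_eq_natCast_iff _ _ _).mpr hmeq]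
      push_cast
      rw [ZMod.natCast_rightInverse c]
      exact hc.symm
  calc Nat.card {z : ZMod (p^n) // (p : ZMod (p^n)) ∣ z}
      = Nat.card (ZMod (p^(n-1))) := (Nat.card_congr (Equiv.ofBijective _ hbij)).symm
    _ = p^(n-1) := Nat.card_zmod _

end ZModSide

section QuotSide
variable {K : Type*} [Field K] [NumberField K] (p n : ℕ)

lemma quot_unit_or_dvd (hp : p.Prime) (hn : 1 ≤ n)
    (hinert : (Ideal.span {(p : 𝓞 K)}).IsPrime) :
    ∀ x : 𝓞 K ⧸ Ideal.span {(p : 𝓞 K) ^ n}, IsUnit x ∨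
      (Ideal.Quotient.mk _ (p : 𝓞 K)) ∣ x := by
  intro x
  obtain ⟨a, rfl⟩ := Ideal.Quotient.mk_surjective x
  by_cases hm : a ∈ Ideal.span {(p : 𝓞 K)}
  · right
    obtain ⟨c, hc⟩ := Ideal.mem_span_singleton.mp hm
    exact ⟨Ideal.Quotient.mk _ c, by rw [hc, map_mul]⟩
  · left
    have hbot : Ideal.span {(p : 𝓞 K)} ≠ ⊥ := by
      rw [Ne, Ideal.span_singleton_eq_bot]
      exact Nat.cast_ne_zero.mpr hp.ne_zero
    have hmax : (Ideal.span {(p : 𝓞 K)}).IsMaximal := hinert.isMaximal hbot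
    obtain ⟨y, i, hi, hyi⟩ := hmax.exists_inv hm
    obtain ⟨z, hz⟩ := Ideal.mem_span_singleton.mp hi
    have hnil : IsNilpotent (Ideal.Quotient.mk (Ideal.span {(p : 𝓞 K) ^ n}) i) := by
      refine ⟨n, ?_⟩
      rw [← map_pow, Ideal.Quotient.eq_zero_iff_mem, Ideal.mem_span_singleton, hz]
      exact ⟨z ^ n, by rw [mul_pow]⟩
    have hone : Ideal.Quotient.mk (Ideal.span {(p : 𝓞 K) ^ n}) (y * a) =
        1 - Ideal.Quotient.mk _ i := by
      rw [eq_sub_iff_add_eq, ← map_add, hyi, map_one]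
    have hu : IsUnit (Ideal.Quotient.mk (Ideal.span {(p : 𝓞 K) ^ n}) (y * a)) := by
      rw [hone]
      exact hnil.isUnit_one_sub
    rw [map_mul] at hu
    exact isUnit_of_mul_isUnit_right hu

lemma quot_p_not_unit (hp : p.Prime) (hn : 1 ≤ n)
    (hinert : (Ideal.span {(p : 𝓞 K)}).IsPrime) :
    ¬ IsUnit (Ideal.Quotient.mk (Ideal.span {(p : 𝓞 K) ^ n}) (p : 𝓞 K)) := by
  intro h
  obtain ⟨c, hc⟩ := h.exists_right_inv
  obtain ⟨c', rfl⟩ := Ideal.Quotient.mk_surjective c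
  rw [← map_mul, ← map_one (Ideal.Quotient.mk (Ideal.span {(p : 𝓞 K) ^ n})),
    Ideal.Quotient.eq] at hc
  have hle : Ideal.span {(p : 𝓞 K) ^ n} ≤ Ideal.span {(p : 𝓞 K)} :=
    Ideal.span_singleton_le_span_singleton.mpr (dvd_pow_self _ (by omega))
  have h1 : (1 : 𝓞 K) ∈ Ideal.span {(p : 𝓞 K)} := by
    have := hle hc
    obtain ⟨d, hd⟩ := Ideal.mem_span_singleton.mp this
    exact Ideal.mem_span_singleton.mpr ⟨c' - d, by linear_combination -hd⟩
  exact hinert.ne_top (Ideal.eq_top_of_isUnit_mem _ h1 isUnit_one)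

lemma quot_charP (hp : p.Prime) (hn : 1 ≤ n) :
    CharP (𝓞 K ⧸ Ideal.span {(p : 𝓞 K) ^ n}) (p ^ n) := by
  constructor
  intro m
  rw [← map_natCast (Ideal.Quotient.mk (Ideal.span {(p : 𝓞 K) ^ n})),
    Ideal.Quotient.eq_zero_iff_mem, Ideal.mem_span_singleton]
  constructor
  · intro hdvd
    obtain ⟨w, hw⟩ := hdvd
    have := int_dvd_of_dvd_in_ring ((p : ℤ) ^ n) (m : ℤ)
      (pow_ne_zero _ (by exact_mod_cast hp.ne_zero)) ⟨w, by push_cast; push_cast at hw; exact hw⟩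
    exact_mod_cast this
  · intro hdvd
    obtain ⟨c, hc⟩ := hdvd
    exact ⟨(c : 𝓞 K), by rw [hc]; push_cast; ring⟩

end QuotSide


lemma ProjLine.map_refl {S : Type*} [CommRing S] (q : ProjLine S) :
    ProjLine.map (RingEquiv.refl S) q = q := by
  obtain ⟨v, rfl⟩ := Quotient.exists_rep q
  exact Quotient.sound ⟨1, by simp, by simp⟩

/-- Let `𝒪` be the ring of integers of an imaginary quadratic field `K = ℚ(√d)` with `d < 0`
squarefree, `p` a prime not dividing `d` with `(p)` inert, `R = 𝒪/(pⁿ)` with conjugation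
`σ̄`.  Then the `σ̄`-fixed points of `ℙ¹(R)` are in bijection with `ℙ¹(ℤ/pⁿℤ)`, and hence
number `pⁿ + pⁿ⁻¹`. -/
theorem conj_fixed_points_projLine (K : Type*) [Field K] [NumberField K]
    (hdeg : Module.finrank ℚ K = 2)
    (him : ∀ v : NumberField.InfinitePlace K, v.IsComplex)
    (σ : 𝓞 K ≃+* 𝓞 K)
    (hσ : ∀ x : 𝓞 K, σ x = x ↔ ∃ m : ℤ, x = (m : 𝓞 K))
    (p n : ℕ) (hp : p.Prime) (hn : 1 ≤ n)
    (hinert : (Ideal.span {(p : 𝓞 K)}).IsPrime)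
    (σbar : (𝓞 K ⧸ Ideal.span {(p : 𝓞 K) ^ n}) ≃+* (𝓞 K ⧸ Ideal.span {(p : 𝓞 K) ^ n}))
    (hcomm : ∀ x : 𝓞 K,
      σbar (Ideal.Quotient.mk (Ideal.span {(p : 𝓞 K) ^ n}) x) =
        Ideal.Quotient.mk (Ideal.span {(p : 𝓞 K) ^ n}) (σ x)) :
    Nonempty
      ({x : ProjLine (𝓞 K ⧸ Ideal.span {(p : 𝓞 K) ^ n}) // ProjLine.map σbar x = x} ≃
        ProjLine (ZMod (p ^ n))) ∧
    Nat.card {x : ProjLine (𝓞 K ⧸ Ideal.span {(p : 𝓞 K) ^ n}) // ProjLine.map σbar x = x} =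
      p ^ n + p ^ (n - 1) := by
  haveI hchar : CharP (𝓞 K ⧸ Ideal.span {(p : 𝓞 K) ^ n}) (p ^ n) := quot_charP p n hp hn
  haveI : NeZero (p ^ n) := ⟨pow_ne_zero n hp.ne_zero⟩
  let φ : ZMod (p ^ n) →+* 𝓞 K ⧸ Ideal.span {(p : 𝓞 K) ^ n} := ZMod.castHom dvd_rfl _
  have hφinj : Function.Injective φ := ZMod.castHom_injective _
  have hle : Ideal.span {(p : 𝓞 K) ^ n} ≤ Ideal.span {(p : 𝓞 K)} :=
    Ideal.span_singleton_le_span_singleton.mpr (dvd_pow_self _ (by omega))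
  have hfixφ : ∀ x : 𝓞 K ⧸ Ideal.span {(p : 𝓞 K) ^ n},
      σbar x = x ↔ ∃ w : ZMod (p ^ n), φ w = x := by
    intro x
    constructor
    · intro hx
      obtain ⟨a, rfl⟩ := Ideal.Quotient.mk_surjective x
      rw [hcomm, Ideal.Quotient.eq] at hx
      obtain ⟨m, hm⟩ := fixed_mod_int hdeg σ hσ p n hp hn hinert a hx
      refine ⟨(m : ZMod (p ^ n)), ?_⟩
      rw [map_intCast, ← map_intCast (Ideal.Quotient.mk (Ideal.span {(p : 𝓞 K) ^ n})) m,
        Ideal.Quotient.eq]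
      simpa using neg_mem hm
    · rintro ⟨w, rfl⟩
      obtain ⟨m, rfl⟩ := ZMod.intCast_surjective w
      rw [map_intCast, ← map_intCast (Ideal.Quotient.mk (Ideal.span {(p : 𝓞 K) ^ n})) m,
        hcomm, map_intCast]
  have hφp : (Ideal.Quotient.mk (Ideal.span {(p : 𝓞 K) ^ n})) (p : 𝓞 K) =
      φ ((p : ZMod (p ^ n))) := by
    rw [map_natCast, map_natCast]
  let E1 : ZMod (p ^ n) ≃ {x : 𝓞 K ⧸ Ideal.span {(p : 𝓞 K) ^ n} // σbar x = x} := by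
    refine Equiv.ofBijective (fun w => ⟨φ w, (hfixφ _).mpr ⟨w, rfl⟩⟩) ⟨?_, ?_⟩
    · intro w₁ w₂ h
      exact hφinj (congrArg Subtype.val h)
    · rintro ⟨x, hx⟩
      obtain ⟨w, hw⟩ := (hfixφ x).mp hx
      exact ⟨w, Subtype.ext hw⟩
  let E2 : {z : ZMod (p ^ n) // (p : ZMod (p ^ n)) ∣ z} ≃
      {z : 𝓞 K ⧸ Ideal.span {(p : 𝓞 K) ^ n} //
        (Ideal.Quotient.mk (Ideal.span {(p : 𝓞 K) ^ n})) (p : 𝓞 K) ∣ z ∧ σbar z = z} := by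
    refine Equiv.ofBijective (fun z => ⟨φ z.1, ⟨?_, (hfixφ _).mpr ⟨z.1, rfl⟩⟩⟩) ⟨?_, ?_⟩
    · obtain ⟨c, hc⟩ := z.2
      exact ⟨φ c, by rw [hc, map_mul, hφp]⟩
    · intro z₁ z₂ h
      exact Subtype.ext (hφinj (congrArg Subtype.val h))
    · rintro ⟨z, hz1, hz2⟩
      obtain ⟨w, hw⟩ := (hfixφ z).mp hz2
      obtain ⟨m, rfl⟩ := ZMod.intCast_surjective w
      refine ⟨⟨(m : ZMod (p ^ n)), ?_⟩, Subtype.ext hw⟩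
      rw [← hw] at hz1
      obtain ⟨c, hc⟩ := hz1
      obtain ⟨c', rfl⟩ := Ideal.Quotient.mk_surjective c
      rw [map_intCast, ← map_intCast (Ideal.Quotient.mk (Ideal.span {(p : 𝓞 K) ^ n})) m,
        ← map_mul, Ideal.Quotient.eq] at hc
      obtain ⟨d, hd⟩ := Ideal.mem_span_singleton.mp (hle hc)
      have hpd : ((p : ℤ) : 𝓞 K) ∣ ((m : ℤ) : 𝓞 K) := by
        refine ⟨c' + d, ?_⟩
        push_cast
        push_cast at hd
        linear_combination hd
      have hdvd : (p : ℤ) ∣ m :=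
        int_dvd_of_dvd_in_ring (p : ℤ) m (by exact_mod_cast hp.ne_zero) hpd
      obtain ⟨t, ht⟩ := hdvd
      rw [ht]
      exact ⟨(t : ZMod (p ^ n)), by push_cast; ring⟩
  let E3 := projFixedEquiv ((Ideal.Quotient.mk (Ideal.span {(p : 𝓞 K) ^ n})) (p : 𝓞 K)) σbar
    (quot_unit_or_dvd p n hp hn hinert) (quot_p_not_unit p n hp hn hinert)
  let E4 := projFixedEquiv (p : ZMod (p ^ n)) (RingEquiv.refl _)
    (zmod_unit_or_dvd p n hp hn) (zmod_p_not_unit p n hp hn)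
  let A1 : ZMod (p ^ n) ≃ {x : ZMod (p ^ n) // (RingEquiv.refl (ZMod (p ^ n))) x = x} :=
    (Equiv.subtypeUnivEquiv (fun x => rfl)).symm
  let A2 : {z : ZMod (p ^ n) // (p : ZMod (p ^ n)) ∣ z} ≃
      {z : ZMod (p ^ n) // (p : ZMod (p ^ n)) ∣ z ∧ (RingEquiv.refl (ZMod (p ^ n))) z = z} :=
    Equiv.subtypeEquivRight (fun z => by simp)
  let A3 : {q : ProjLine (ZMod (p ^ n)) // ProjLine.map (RingEquiv.refl _) q = q} ≃
      ProjLine (ZMod (p ^ n)) := Equiv.subtypeUnivEquiv ProjLine.map_refl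
  let Emid : {x : ProjLine (𝓞 K ⧸ Ideal.span {(p : 𝓞 K) ^ n}) // ProjLine.map σbar x = x} ≃
      (ZMod (p ^ n) ⊕ {z : ZMod (p ^ n) // (p : ZMod (p ^ n)) ∣ z}) :=
    E3.symm.trans (Equiv.sumCongr E1.symm E2.symm)
  let Efin : {x : ProjLine (𝓞 K ⧸ Ideal.span {(p : 𝓞 K) ^ n}) // ProjLine.map σbar x = x} ≃
      ProjLine (ZMod (p ^ n)) :=
    Emid.trans ((Equiv.sumCongr A1 A2).trans (E4.trans A3))
  refine ⟨⟨Efin⟩, ?_⟩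
  rw [Nat.card_congr Emid, Nat.card_sum, Nat.card_zmod, card_dvd_zmod p n hp hn]
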